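/- Let P be a strictly positive joint distribution over finitely many finite-valued random variables X = (X1, X2), and suppose P is a Partitioned Markov Network with respect to a graph G. If X_u ∈ X1 and X_v ∈ X2 with v ∉ N(u) (u and v are not adjacent in G), then X_u and X_v are conditionally independent given all remaining variables: X_u ⫫ X_v | X \ {X_u, X_v}. -/

import Mathlib

open Finset

variable {ι V : Type*}

/-- The marginal probability `P(X_A = x_A)`. -/
noncomputable def margin [Fintype ι] [Fintype V] [DecidableEq ι] [DecidableEq V]
    (P : (ι → V) → ℝ) (A : Finset ι) (x : ι → V) : ℝ :=
  ∑ y ∈ Finset.univ.filter (fun y : ι → V => ∀ i ∈ A, y i = x i), P y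

/-- `P` is a partitioned Markov network w.r.t. `G` for the partition `(X1, X1ᶜ)`. -/
noncomputable def IsPMN [Fintype ι] [Fintype V] [DecidableEq ι] [DecidableEq V]
    (P : (ι → V) → ℝ) (G : SimpleGraph ι) [DecidableRel G.Adj] (X1 : Finset ι) : Prop :=
  (∀ i ∈ X1, ∀ x : ι → V,
      margin P (insert i ((X1 ∪ G.neighborFinset i).erase i)) x
          / margin P ((X1 ∪ G.neighborFinset i).erase i) x
        = P x / margin P (Finset.univ.erase i) x) ∧
  (∀ i ∈ X1ᶜ, ∀ x : ι → V,
      margin P (insert i ((X1ᶜ ∪ G.neighborFinset i).erase i)) x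
          / margin P ((X1ᶜ ∪ G.neighborFinset i).erase i) x
        = P x / margin P (Finset.univ.erase i) x)

section aux
variable [Fintype ι] [Fintype V] [DecidableEq ι] [DecidableEq V]

lemma margin_congr (P : (ι → V) → ℝ) (A : Finset ι) {x y : ι → V}
    (h : ∀ i ∈ A, x i = y i) : margin P A x = margin P A y := by
  unfold margin
  apply Finset.sum_congr _ (fun _ _ => rfl)
  ext z
  simp only [mem_filter, mem_univ, true_and]
  exact ⟨fun h2 i hi => (h2 i hi).trans (h i hi),
    fun h2 i hi => (h2 i hi).trans (h i hi).symm⟩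

lemma margin_pos (P : (ι → V) → ℝ) (hpos : ∀ x, 0 < P x) (A : Finset ι) (x : ι → V) :
    0 < margin P A x :=
  Finset.sum_pos (fun y _ => hpos y) ⟨x, by simp⟩

lemma margin_univ (P : (ι → V) → ℝ) (x : ι → V) : margin P univ x = P x := by
  unfold margin
  rw [show Finset.univ.filter (fun y : ι → V => ∀ i ∈ univ, y i = x i) = {x} by
    ext z; simp [funext_iff]]
  simp

lemma margin_erase (P : (ι → V) → ℝ) (A : Finset ι) {v : ι} (hv : v ∈ A) (x : ι → V) :
    margin P (A.erase v) x = ∑ w : V, margin P A (Function.update x v w) := by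
  unfold margin
  rw [← Finset.sum_fiberwise_of_maps_to (g := fun y : ι → V => y v) (t := univ)
    (fun _ _ => mem_univ _)]
  apply Finset.sum_congr rfl
  intro w _
  apply Finset.sum_congr _ (fun _ _ => rfl)
  ext z
  simp only [mem_filter, mem_univ, true_and, mem_erase, Function.update]
  constructor
  · rintro ⟨h1, h2⟩ i hi
    by_cases hiv : i = v
    · subst hiv; simpa using h2
    · simpa [hiv] using h1 i ⟨hiv, hi⟩
  · intro h
    refine ⟨fun i hi => ?_, by simpa using h v hv⟩
    have := h i hi.2
    simpa [hi.1] using this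

end aux

/-- If a strictly positive `P` is a PMN w.r.t. `G`, `u ∈ X1`, `v ∈ X2 = X1ᶜ` and `u,v`
are not adjacent in `G`, then `X_u ⫫ X_v` given all the remaining variables:
`P(X_u, X_v | rest) = P(X_u | rest) · P(X_v | rest)` for every configuration. -/
theorem pmn_pairwise_condIndep [Fintype ι] [Fintype V] [DecidableEq ι] [DecidableEq V]
    (P : (ι → V) → ℝ) (hpos : ∀ x, 0 < P x) (hsum : ∑ x : ι → V, P x = 1)
    (G : SimpleGraph ι) [DecidableRel G.Adj]
    (X1 : Finset ι) (hPMN : IsPMN P G X1)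
    (u v : ι) (hu : u ∈ X1) (hv : v ∈ X1ᶜ) (hnadj : ¬ G.Adj u v) :
    ∀ x : ι → V,
      P x / margin P ((Finset.univ.erase u).erase v) x
        = (margin P (Finset.univ.erase v) x / margin P ((Finset.univ.erase u).erase v) x)
          * (margin P (Finset.univ.erase u) x / margin P ((Finset.univ.erase u).erase v) x) := by
  obtain ⟨h1, -⟩ := hPMN
  intro x
  have huv : u ≠ v := fun h => (Finset.mem_compl.mp hv) (h ▸ hu)
  have hvX1 : v ∉ X1 := Finset.mem_compl.mp hv
  have hvN : v ∉ G.neighborFinset u := by simpa using hnadj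
  have hvS2 : v ∉ (X1 ∪ G.neighborFinset u).erase u := by
    simp [Finset.mem_erase, hvX1, hvN]
  have hvS1 : v ∉ insert u ((X1 ∪ G.neighborFinset u).erase u) := by
    simp [huv.symm, hvS2]
  set mu := margin P (Finset.univ.erase u) x with hmu
  set c := P x / mu with hc
  have key : ∀ w, P (Function.update x v w)
      = c * margin P (Finset.univ.erase u) (Function.update x v w) := by
    intro w
    have e1 := h1 u hu x
    have e2 := h1 u hu (Function.update x v w)
    have agree : ∀ (A : Finset ι), v ∉ A → ∀ i ∈ A,
        Function.update x v w i = x i := by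
      intro A hA i hi
      have : i ≠ v := fun h => hA (h ▸ hi)
      simp [Function.update, this]
    rw [margin_congr P _ (agree _ hvS1), margin_congr P _ (agree _ hvS2), e1] at e2
    have hmp := margin_pos P hpos (Finset.univ.erase u) (Function.update x v w)
    have hmup := margin_pos P hpos (Finset.univ.erase u) x
    rw [div_eq_div_iff hmup.ne' hmp.ne'] at e2
    rw [hc, div_mul_eq_mul_div, eq_div_iff hmup.ne']
    linarith [e2]
  have hmv : margin P (Finset.univ.erase v) x
      = c * margin P ((Finset.univ.erase u).erase v) x := by
    rw [margin_erase P Finset.univ (Finset.mem_univ v) x,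
        margin_erase P (Finset.univ.erase u)
          (Finset.mem_erase.mpr ⟨huv.symm, Finset.mem_univ v⟩) x,
        Finset.mul_sum]
    exact Finset.sum_congr rfl fun w _ => by rw [margin_univ, key w]
  have hmRpos := margin_pos P hpos ((Finset.univ.erase u).erase v) x
  have hmupos := margin_pos P hpos (Finset.univ.erase u) x
  rw [hmv, hc]
  field_simp
  have hmu0 : mu ≠ 0 := hmupos.ne'
  rw [mul_div_cancel_right₀ _ hmu0]
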